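/- Let x₀, y₀ ∈ ℕ and let u, p, q : ℕ × ℕ → ℝ with u, p nonnegative, q(x,y) > 0 for all (x,y), and q nondecreasing in each of its two variables. If u(x,y) ≤ q(x,y) + Σ_{s=x₀}^{x−1} Σ_{η=x₀}^{s−1} Σ_{τ=y₀}^{y−1} p(η,τ) u(η,τ) for all x ≥ x₀ and y ≥ y₀, then u(x,y) ≤ q(x,y) · ∏_{s=x₀}^{x−1} ( 1 + Σ_{η=x₀}^{s−1} Σ_{τ=y₀}^{y−1} p(η,τ) ) for all x ≥ x₀ and y ≥ y₀. -/

import Mathlib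

section Aux

variable (x₀ y₀ : ℕ) (p : ℕ → ℕ → ℝ)

private noncomputable def Eaux (s y : ℕ) : ℝ :=
  ∑ η ∈ Finset.Ico x₀ s, ∑ τ ∈ Finset.Ico y₀ y, p η τ

private noncomputable def Qaux (x y : ℕ) : ℝ :=
  ∏ s ∈ Finset.Ico x₀ x, (1 + Eaux x₀ y₀ p s y)

private lemma Eaux_nonneg (hp : ∀ x y, 0 ≤ p x y) (s y : ℕ) : 0 ≤ Eaux x₀ y₀ p s y :=
  Finset.sum_nonneg fun _ _ => Finset.sum_nonneg fun _ _ => hp _ _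

private lemma Eaux_mono_y (hp : ∀ x y, 0 ≤ p x y) {s y₁ y₂ : ℕ} (h : y₁ ≤ y₂) :
    Eaux x₀ y₀ p s y₁ ≤ Eaux x₀ y₀ p s y₂ := by
  refine Finset.sum_le_sum fun η _ => ?_
  exact Finset.sum_le_sum_of_subset_of_nonneg
    (Finset.Ico_subset_Ico le_rfl h) (fun τ _ _ => hp _ _)

private lemma Qaux_one_le (hp : ∀ x y, 0 ≤ p x y) (x y : ℕ) : 1 ≤ Qaux x₀ y₀ p x y := by
  calc (1:ℝ) = ∏ s ∈ Finset.Ico x₀ x, 1 := by simp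
  _ ≤ Qaux x₀ y₀ p x y :=
    Finset.prod_le_prod (fun _ _ => zero_le_one)
      (fun s _ => le_add_of_nonneg_right (Eaux_nonneg x₀ y₀ p hp s y))

private lemma Qaux_nonneg (hp : ∀ x y, 0 ≤ p x y) (x y : ℕ) : 0 ≤ Qaux x₀ y₀ p x y :=
  zero_le_one.trans (Qaux_one_le x₀ y₀ p hp x y)

private lemma Qaux_mono_x (hp : ∀ x y, 0 ≤ p x y) {a b : ℕ} (hab : a ≤ b) (y : ℕ) (hx : x₀ ≤ a) :
    Qaux x₀ y₀ p a y ≤ Qaux x₀ y₀ p b y := by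
  have hsplit : Qaux x₀ y₀ p a y * (∏ s ∈ Finset.Ico a b, (1 + Eaux x₀ y₀ p s y))
      = Qaux x₀ y₀ p b y := Finset.prod_Ico_consecutive _ hx hab
  have h1 : (1:ℝ) ≤ ∏ s ∈ Finset.Ico a b, (1 + Eaux x₀ y₀ p s y) := by
    calc (1:ℝ) = ∏ s ∈ Finset.Ico a b, 1 := by simp
    _ ≤ _ := Finset.prod_le_prod (fun _ _ => zero_le_one)
      (fun s _ => le_add_of_nonneg_right (Eaux_nonneg x₀ y₀ p hp s y))
  calc Qaux x₀ y₀ p a y = Qaux x₀ y₀ p a y * 1 := (mul_one _).symm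
  _ ≤ Qaux x₀ y₀ p a y * (∏ s ∈ Finset.Ico a b, (1 + Eaux x₀ y₀ p s y)) :=
      mul_le_mul_of_nonneg_left h1 (Qaux_nonneg x₀ y₀ p hp a y)
  _ = Qaux x₀ y₀ p b y := hsplit

private lemma Qaux_mono_y (hp : ∀ x y, 0 ≤ p x y) (x : ℕ) {y₁ y₂ : ℕ} (h : y₁ ≤ y₂) :
    Qaux x₀ y₀ p x y₁ ≤ Qaux x₀ y₀ p x y₂ := by
  refine Finset.prod_le_prod (fun s _ => ?_) (fun s _ => ?_)
  · exact le_trans zero_le_one (le_add_of_nonneg_right (Eaux_nonneg x₀ y₀ p hp s y₁))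
  · exact add_le_add_right (Eaux_mono_y x₀ y₀ p hp h) 1

private lemma Qaux_identity (y : ℕ) :
    ∀ x, x₀ ≤ x → Qaux x₀ y₀ p x y
      = 1 + ∑ s ∈ Finset.Ico x₀ x, Eaux x₀ y₀ p s y * Qaux x₀ y₀ p s y := by
  intro x hx
  induction x, hx using Nat.le_induction with
  | base => simp [Qaux]
  | succ n hn ih =>
    rw [Qaux, Finset.prod_Ico_succ_top hn, Finset.sum_Ico_succ_top hn, ← Qaux]
    rw [ih]
    ring

private lemma aux_gronwall (hp : ∀ x y, 0 ≤ p x y) (w : ℕ → ℕ → ℝ)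
    (hw : ∀ x y, 0 ≤ w x y)
    (h : ∀ x y, x₀ ≤ x → y₀ ≤ y →
      w x y ≤ 1 + ∑ s ∈ Finset.Ico x₀ x, ∑ η ∈ Finset.Ico x₀ s,
        ∑ τ ∈ Finset.Ico y₀ y, p η τ * w η τ) :
    ∀ x y, x₀ ≤ x → y₀ ≤ y → w x y ≤ Qaux x₀ y₀ p x y := by
  intro x
  induction x using Nat.strong_induction_on with
  | _ x ih =>
    intro y hx hy
    have step : w x y ≤ 1 + ∑ s ∈ Finset.Ico x₀ x, ∑ η ∈ Finset.Ico x₀ s,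
        ∑ τ ∈ Finset.Ico y₀ y, p η τ * w η τ := h x y hx hy
    have bound : ∀ s ∈ Finset.Ico x₀ x, ∀ η ∈ Finset.Ico x₀ s,
        ∀ τ ∈ Finset.Ico y₀ y, p η τ * w η τ ≤ p η τ * Qaux x₀ y₀ p s y := by
      intro s hs η hη τ hτ
      simp only [Finset.mem_Ico] at hs hη hτ
      have h1 : w η τ ≤ Qaux x₀ y₀ p η τ :=
        ih η (lt_of_lt_of_le hη.2 (le_of_lt hs.2)) τ hη.1 hτ.1
      have h2 : Qaux x₀ y₀ p η τ ≤ Qaux x₀ y₀ p η y :=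
        Qaux_mono_y x₀ y₀ p hp η (le_of_lt hτ.2)
      have h3 : Qaux x₀ y₀ p η y ≤ Qaux x₀ y₀ p s y :=
        Qaux_mono_x x₀ y₀ p hp (le_of_lt hη.2) y hη.1
      exact mul_le_mul_of_nonneg_left (h1.trans (h2.trans h3)) (hp η τ)
    calc w x y ≤ 1 + ∑ s ∈ Finset.Ico x₀ x, ∑ η ∈ Finset.Ico x₀ s,
        ∑ τ ∈ Finset.Ico y₀ y, p η τ * w η τ := step
    _ ≤ 1 + ∑ s ∈ Finset.Ico x₀ x, ∑ η ∈ Finset.Ico x₀ s,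
        ∑ τ ∈ Finset.Ico y₀ y, p η τ * Qaux x₀ y₀ p s y := by
        refine add_le_add_right (Finset.sum_le_sum fun s hs => ?_) 1
        refine Finset.sum_le_sum fun η hη => Finset.sum_le_sum fun τ hτ => ?_
        exact bound s hs η hη τ hτ
    _ = 1 + ∑ s ∈ Finset.Ico x₀ x, Eaux x₀ y₀ p s y * Qaux x₀ y₀ p s y := by
        congr 1
        refine Finset.sum_congr rfl fun s _ => ?_
        rw [Eaux, Finset.sum_mul]
        refine Finset.sum_congr rfl fun η _ => ?_
        rw [Finset.sum_mul]
    _ = Qaux x₀ y₀ p x y := (Qaux_identity x₀ y₀ p y x hx).symm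

end Aux

/-- Discrete (𝕋₁ = 𝕋₂ = ℤ) case of Theorem 2.2: a Gronwall-type inequality
with a positive nondecreasing forcing term q. -/
theorem stmt_3 (x₀ y₀ : ℕ) (u p q : ℕ → ℕ → ℝ)
    (hu_nonneg : ∀ x y, 0 ≤ u x y)
    (hp_nonneg : ∀ x y, 0 ≤ p x y)
    (hq_pos : ∀ x y, 0 < q x y)
    (hq_mono_x : ∀ x₁ x₂ y, x₁ ≤ x₂ → q x₁ y ≤ q x₂ y)
    (hq_mono_y : ∀ x y₁ y₂, y₁ ≤ y₂ → q x y₁ ≤ q x y₂)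
    (hineq : ∀ x y, x₀ ≤ x → y₀ ≤ y →
      u x y ≤ q x y + ∑ s ∈ Finset.Ico x₀ x, ∑ η ∈ Finset.Ico x₀ s,
        ∑ τ ∈ Finset.Ico y₀ y, p η τ * u η τ) :
    ∀ x y, x₀ ≤ x → y₀ ≤ y →
      u x y ≤ q x y * ∏ s ∈ Finset.Ico x₀ x,
        (1 + ∑ η ∈ Finset.Ico x₀ s, ∑ τ ∈ Finset.Ico y₀ y, p η τ) := by
  set w : ℕ → ℕ → ℝ := fun x y => u x y / q x y with hw_def
  have hw_nonneg : ∀ x y, 0 ≤ w x y := fun x y =>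
    div_nonneg (hu_nonneg x y) (hq_pos x y).le
  have hw : ∀ x y, x₀ ≤ x → y₀ ≤ y →
      w x y ≤ 1 + ∑ s ∈ Finset.Ico x₀ x, ∑ η ∈ Finset.Ico x₀ s,
        ∑ τ ∈ Finset.Ico y₀ y, p η τ * w η τ := by
    intro x y hx hy
    have hq : 0 < q x y := hq_pos x y
    rw [hw_def, div_le_iff₀ hq]
    calc u x y ≤ q x y + ∑ s ∈ Finset.Ico x₀ x, ∑ η ∈ Finset.Ico x₀ s,
        ∑ τ ∈ Finset.Ico y₀ y, p η τ * u η τ := hineq x y hx hy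
    _ ≤ q x y + ∑ s ∈ Finset.Ico x₀ x, ∑ η ∈ Finset.Ico x₀ s,
        ∑ τ ∈ Finset.Ico y₀ y, p η τ * w η τ * q x y := by
        refine add_le_add_right ?_ _
        refine Finset.sum_le_sum fun s hs => Finset.sum_le_sum fun η hη =>
          Finset.sum_le_sum fun τ hτ => ?_
        simp only [Finset.mem_Ico] at hs hη hτ
        have hqle : q η τ ≤ q x y :=
          (hq_mono_x η x τ ((le_of_lt hη.2).trans (le_of_lt hs.2))).trans
            (hq_mono_y x τ y (le_of_lt hτ.2))
        have : u η τ ≤ w η τ * q x y := by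
          rw [hw_def]
          calc u η τ = u η τ / q η τ * q η τ := (div_mul_cancel₀ _ (hq_pos η τ).ne').symm
          _ ≤ u η τ / q η τ * q x y :=
              mul_le_mul_of_nonneg_left hqle (hw_nonneg η τ)
        calc p η τ * u η τ ≤ p η τ * (w η τ * q x y) :=
              mul_le_mul_of_nonneg_left this (hp_nonneg η τ)
        _ = p η τ * w η τ * q x y := by ring
    _ = (1 + ∑ s ∈ Finset.Ico x₀ x, ∑ η ∈ Finset.Ico x₀ s,
        ∑ τ ∈ Finset.Ico y₀ y, p η τ * w η τ) * q x y := by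
        simp only [Finset.sum_mul, add_mul, one_mul]
  intro x y hx hy
  have key := aux_gronwall x₀ y₀ p hp_nonneg w hw_nonneg hw x y hx hy
  rw [hw_def] at key
  simp only at key
  rw [div_le_iff₀ (hq_pos x y)] at key
  calc u x y ≤ Qaux x₀ y₀ p x y * q x y := key
  _ = q x y * ∏ s ∈ Finset.Ico x₀ x,
      (1 + ∑ η ∈ Finset.Ico x₀ s, ∑ τ ∈ Finset.Ico y₀ y, p η τ) := by
      rw [mul_comm]; rfl
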